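/- Let t₁ < t₂ with sin t₁ ≠ 0 or sin t₂ ≠ 0, and define Δx = sin t₂ − sin t₁, Δξ = ξ(t₂) − ξ(t₁) > 0, l² = Δx² + Δξ². Then the following energy-gradient identity holds: −l sin(t₁)·∂α/∂t₁ + l sin(t₂)·∂β/∂t₁ = ∂/∂t₁ (l·Δξ), where α, β are the chord angles of R on [t₁,t₂] and the partials are computed via ∂α/∂t₁ = |R'(t₁)|(sin α/l + 2 sin t₁), ∂β/∂t₁ = |R'(t₁)| sin α/l, with l |R'(t₁)| sin α = −cos t₁·Δξ + ξ'(t₁)·Δx. -/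

import Mathlib

open Real Complex

noncomputable def xi (t : ℝ) : ℝ :=
  ∫ τ in (0:ℝ)..t, Real.sin τ ^ 2 / Real.sqrt (1 + Real.sin τ ^ 2)

noncomputable def R (t : ℝ) : ℂ := (Real.sin t : ℂ) + Complex.I * (xi t : ℂ)

noncomputable def alphaAng (t₁ t₂ : ℝ) : ℝ := Complex.arg (deriv R t₁ / (R t₂ - R t₁))
noncomputable def betaAng (t₁ t₂ : ℝ) : ℝ := Complex.arg (deriv R t₂ / (R t₂ - R t₁))

noncomputable def gg (t : ℝ) : ℝ := Real.sin t ^ 2 / Real.sqrt (1 + Real.sin t ^ 2)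
noncomputable def gg' (t : ℝ) : ℝ :=
  Real.cos t * Real.sin t * (2 + Real.sin t ^ 2) / Real.sqrt (1 + Real.sin t ^ 2) ^ 3
noncomputable def Dc (t : ℝ) : ℂ := (Real.cos t : ℂ) + Complex.I * (gg t : ℂ)
noncomputable def Fc (t : ℝ) : ℂ := (-Real.sin t : ℂ) + Complex.I * (gg' t : ℂ)

lemma sqrt_pos1 (t : ℝ) : 0 < Real.sqrt (1 + Real.sin t ^ 2) :=
  Real.sqrt_pos.2 (by positivity)

lemma sqrt_sq1 (t : ℝ) : Real.sqrt (1 + Real.sin t ^ 2) ^ 2 = 1 + Real.sin t ^ 2 :=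
  Real.sq_sqrt (by positivity)

lemma cont_gg : Continuous gg := by
  apply Continuous.div (by continuity) (by continuity)
  intro t; exact (sqrt_pos1 t).ne'

lemma gg_nonneg (t : ℝ) : 0 ≤ gg t := by unfold gg; positivity

lemma xi_eq (t : ℝ) : xi t = ∫ τ in (0:ℝ)..t, gg τ := rfl

lemma hasDerivAt_xi (t : ℝ) : HasDerivAt xi (gg t) t := by
  have h := intervalIntegral.integral_hasDerivAt_right
    (cont_gg.intervalIntegrable 0 t)
    (cont_gg.stronglyMeasurable.stronglyMeasurableAtFilter)
    cont_gg.continuousAt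
  exact h

lemma xi_diff_eq (t₁ t₂ : ℝ) : xi t₂ - xi t₁ = ∫ τ in t₁..t₂, gg τ := by
  rw [xi_eq, xi_eq, intervalIntegral.integral_interval_sub_left
    (cont_gg.intervalIntegrable 0 t₂) (cont_gg.intervalIntegrable 0 t₁)]

lemma sin_zero_countable : ({x : ℝ | Real.sin x = 0}).Countable := by
  have h : {x : ℝ | Real.sin x = 0} ⊆ Set.range (fun n : ℤ => (n : ℝ) * Real.pi) := by
    intro x hx
    rcases Real.sin_eq_zero_iff.1 hx with ⟨n, hn⟩
    exact ⟨n, hn⟩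
  exact (Set.countable_range _).mono h

open MeasureTheory in
lemma xi_diff_pos {t₁ t₂ : ℝ} (h : t₁ < t₂) : 0 < xi t₂ - xi t₁ := by
  rw [xi_diff_eq, intervalIntegral.integral_of_le h.le]
  rw [MeasureTheory.setIntegral_pos_iff_support_of_nonneg_ae]
  · have hsub : Set.Ioc t₁ t₂ \ {x : ℝ | Real.sin x = 0} ⊆
        Function.support gg ∩ Set.Ioc t₁ t₂ := by
      intro x hx
      refine ⟨?_, hx.1⟩
      have hs : Real.sin x ≠ 0 := hx.2
      simp only [Function.mem_support, gg]
      positivity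
    calc (0:ENNReal) < volume (Set.Ioc t₁ t₂ \ {x : ℝ | Real.sin x = 0}) := by
            rw [measure_diff_null (sin_zero_countable.measure_zero _)]
            simp [Real.volume_Ioc, h]
      _ ≤ _ := measure_mono hsub
  · exact Filter.Eventually.of_forall fun x => gg_nonneg x
  · exact cont_gg.integrableOn_Ioc

lemma hasDerivAt_gg (t : ℝ) : HasDerivAt gg (gg' t) t := by
  have hs : HasDerivAt (fun t => Real.sin t ^ 2) (2 * Real.sin t * Real.cos t) t := by
    have := ((Real.hasDerivAt_sin t).pow 2)
    simpa [mul_comm, mul_assoc, mul_left_comm, Pi.pow_def] using this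
  have hinner : HasDerivAt (fun t => 1 + Real.sin t ^ 2) (2 * Real.sin t * Real.cos t) t := by
    exact hs.const_add 1
  have hne : (1 : ℝ) + Real.sin t ^ 2 ≠ 0 := by positivity
  have hsq : HasDerivAt (fun t => Real.sqrt (1 + Real.sin t ^ 2))
      ((Real.sqrt (1 + Real.sin t ^ 2))⁻¹ * 2⁻¹ * (2 * Real.sin t * Real.cos t)) t := by
    simpa [Function.comp_def] using (Real.hasDerivAt_sqrt hne).comp t hinner
  have hdiv := hs.div hsq (sqrt_pos1 t).ne'
  refine hdiv.congr_deriv (Eq.symm ?_)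
  have hr := (sqrt_pos1 t).ne'
  have hr2 := sqrt_sq1 t
  set r := Real.sqrt (1 + Real.sin t ^ 2) with hrdef
  rw [gg']
  field_simp
  rw [← hrdef]
  linear_combination (-2*Real.cos t*Real.sin t*r^3) * hr2

lemma hasDerivAt_R (t : ℝ) : HasDerivAt R (Dc t) t := by
  have h1 := (Real.hasDerivAt_sin t).ofReal_comp
  have h2 := ((hasDerivAt_xi t).ofReal_comp).const_mul Complex.I
  exact h1.add h2

lemma deriv_R_eq : deriv R = Dc := funext fun t => (hasDerivAt_R t).deriv

lemma hasDerivAt_Dc (t : ℝ) : HasDerivAt Dc (Fc t) t := by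
  have h1 := (Real.hasDerivAt_cos t).ofReal_comp
  have h2 := ((hasDerivAt_gg t).ofReal_comp).const_mul Complex.I
  have h3 := h1.add h2
  rw [Complex.ofReal_neg] at h3
  exact h3

@[simp] lemma Dc_re (t : ℝ) : (Dc t).re = Real.cos t := by rw [Dc]; simp only [Complex.add_re, Complex.add_im, Complex.mul_re, Complex.mul_im, Complex.I_re, Complex.I_im, Complex.ofReal_re, Complex.ofReal_im, Complex.neg_re, Complex.neg_im, Complex.ofReal_neg]; ring
@[simp] lemma Dc_im (t : ℝ) : (Dc t).im = gg t := by rw [Dc]; simp only [Complex.add_re, Complex.add_im, Complex.mul_re, Complex.mul_im, Complex.I_re, Complex.I_im, Complex.ofReal_re, Complex.ofReal_im, Complex.neg_re, Complex.neg_im, Complex.ofReal_neg]; ring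
@[simp] lemma Fc_re (t : ℝ) : (Fc t).re = -Real.sin t := by rw [Fc]; simp only [Complex.add_re, Complex.add_im, Complex.mul_re, Complex.mul_im, Complex.I_re, Complex.I_im, Complex.ofReal_re, Complex.ofReal_im, Complex.neg_re, Complex.neg_im, Complex.ofReal_neg]; ring
@[simp] lemma Fc_im (t : ℝ) : (Fc t).im = gg' t := by rw [Fc]; simp only [Complex.add_re, Complex.add_im, Complex.mul_re, Complex.mul_im, Complex.I_re, Complex.I_im, Complex.ofReal_re, Complex.ofReal_im, Complex.neg_re, Complex.neg_im, Complex.ofReal_neg]; ring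
@[simp] lemma R_re (t : ℝ) : (R t).re = Real.sin t := by rw [R]; simp only [Complex.add_re, Complex.add_im, Complex.mul_re, Complex.mul_im, Complex.I_re, Complex.I_im, Complex.ofReal_re, Complex.ofReal_im, Complex.neg_re, Complex.neg_im, Complex.ofReal_neg]; ring
@[simp] lemma R_im (t : ℝ) : (R t).im = xi t := by rw [R]; simp only [Complex.add_re, Complex.add_im, Complex.mul_re, Complex.mul_im, Complex.I_re, Complex.I_im, Complex.ofReal_re, Complex.ofReal_im, Complex.neg_re, Complex.neg_im, Complex.ofReal_neg]; ring

lemma normSq_Dc (t : ℝ) : Complex.normSq (Dc t) = 1 / (1 + Real.sin t ^ 2) := by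
  rw [Complex.normSq_apply]
  simp only [Dc_re, Dc_im]
  have hr2 := sqrt_sq1 t
  have hr0 : Real.sqrt (1 + Real.sin t ^ 2) ≠ 0 := (sqrt_pos1 t).ne'
  rw [gg]
  field_simp
  rw [hr2]; linear_combination (1 + Real.sin t ^ 2) ^ 2 * Real.sin_sq_add_cos_sq t

lemma Dc_ne_zero (t : ℝ) : Dc t ≠ 0 := by
  intro h
  have h1 := normSq_Dc t
  rw [h, Complex.normSq_zero] at h1
  have h2 : (0:ℝ) < 1 / (1 + Real.sin t ^ 2) := by positivity
  linarith

lemma im_Fc_div_Dc (t : ℝ) : (Fc t / Dc t).im = 2 * Real.sin t / Real.sqrt (1 + Real.sin t ^ 2) := by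
  rw [Complex.div_im, normSq_Dc]
  simp only [Dc_re, Dc_im, Fc_re, Fc_im]
  have hr2 := sqrt_sq1 t
  have hr0 : Real.sqrt (1 + Real.sin t ^ 2) ≠ 0 := (sqrt_pos1 t).ne'
  rw [gg, gg']
  have hc2 : Real.cos t ^ 2 = 1 - Real.sin t ^ 2 := by nlinarith [Real.sin_sq_add_cos_sq t]
  field_simp
  rw [hr2, hc2]; ring

lemma div_mem_slitPlane {z w : ℂ} (him : 0 ≤ z.im) (h0 : z.im = 0 → z.re ≠ 0)
    (hw : 0 < w.im) : z / w ∈ Complex.slitPlane := by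
  have hw0 : w ≠ 0 := by intro h; rw [h] at hw; simp at hw
  have hns : 0 < Complex.normSq w := Complex.normSq_pos.2 hw0
  rw [Complex.mem_slitPlane_iff, Complex.div_re, Complex.div_im]
  rcases eq_or_lt_of_le him with hz0 | hzpos
  · right
    rw [← hz0]
    have hre := h0 hz0.symm
    simp only [zero_mul, zero_div, zero_sub, ne_eq, neg_eq_zero]
    exact fun hc => (div_eq_zero_iff.1 hc).elim
      (fun hc' => (mul_eq_zero.1 hc').elim hre hw.ne') (fun hc' => hns.ne' hc')
  · by_cases him0 : z.im * w.re / Complex.normSq w - z.re * w.im / Complex.normSq w = 0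
    · left
      have heq : z.im * w.re = z.re * w.im := by
        rw [div_sub_div_same, div_eq_zero_iff] at him0
        rcases him0 with h1 | h1
        · linarith
        · exact absurd h1 hns.ne'
      have key : (z.re * w.re + z.im * w.im) * z.im = w.im * (z.re ^ 2 + z.im ^ 2) := by
        linear_combination z.re * heq
      have hzsq : (0:ℝ) < z.re ^ 2 + z.im ^ 2 := by positivity
      have hS : 0 < z.re * w.re + z.im * w.im := by
        nlinarith [key, mul_pos hw hzsq]
      rw [← add_div]
      exact div_pos hS hns
    · right; exact him0

theorem energy_gradient_identity (t₁ t₂ : ℝ) (h : t₁ < t₂)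
    (hs : Real.sin t₁ ≠ 0 ∨ Real.sin t₂ ≠ 0) :
    -‖R t₂ - R t₁‖ * Real.sin t₁ * deriv (fun s => alphaAng s t₂) t₁
      + ‖R t₂ - R t₁‖ * Real.sin t₂ * deriv (fun s => betaAng s t₂) t₁
      = deriv (fun s => ‖R t₂ - R s‖ * (xi t₂ - xi s)) t₁ := by
  -- notation
  have hq : 0 < xi t₂ - xi t₁ := xi_diff_pos h
  set Δ : ℂ := R t₂ - R t₁ with hΔdef
  have hΔre : Δ.re = Real.sin t₂ - Real.sin t₁ := by simp [hΔdef, Complex.sub_re]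
  have hΔim : Δ.im = xi t₂ - xi t₁ := by simp [hΔdef, Complex.sub_im]
  have hΔimpos : 0 < Δ.im := by rw [hΔim]; exact hq
  have hΔ0 : Δ ≠ 0 := by
    intro hc; rw [hc] at hΔimpos; simp at hΔimpos
  have hns : Complex.normSq Δ = (Real.sin t₂ - Real.sin t₁) ^ 2 + (xi t₂ - xi t₁) ^ 2 := by
    rw [Complex.normSq_apply, hΔre, hΔim]; ring
  have hnpos : 0 < (Real.sin t₂ - Real.sin t₁) ^ 2 + (xi t₂ - xi t₁) ^ 2 := by positivity
  -- derivative of s ↦ R t₂ - R s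
  have hRfun : HasDerivAt (fun s => R t₂ - R s) (-(Dc t₁)) t₁ :=
    (hasDerivAt_R t₁).const_sub (R t₂)
  -- slit plane facts
  have hslit : ∀ t : ℝ, Dc t / Δ ∈ Complex.slitPlane := by
    intro t
    apply div_mem_slitPlane _ _ hΔimpos
    · rw [Dc_im]; exact gg_nonneg t
    · rw [Dc_im, Dc_re]
      intro h0
      have hsin : Real.sin t = 0 := by
        have := (sqrt_pos1 t)
        rw [gg, div_eq_zero_iff] at h0
        rcases h0 with h1 | h1
        · exact pow_eq_zero_iff (n := 2) (by norm_num) |>.1 h1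
        · exact absurd h1 this.ne'
      intro hcos
      have := Real.sin_sq_add_cos_sq t
      rw [hsin, hcos] at this; norm_num at this
  -- α derivative
  have hquotα : HasDerivAt (fun s => Dc s / (R t₂ - R s))
      ((Fc t₁ * Δ - Dc t₁ * -(Dc t₁)) / Δ ^ 2) t₁ :=
    (hasDerivAt_Dc t₁).div hRfun hΔ0
  have hlogα := (Complex.hasDerivAt_log (hslit t₁)).comp t₁ hquotα
  have himα := Complex.imCLM.hasFDerivAt.comp_hasDerivAt t₁ hlogα
  have hαfun : (fun s => alphaAng s t₂) =
      fun s => (Complex.log (Dc s / (R t₂ - R s))).im := by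
    funext s
    rw [alphaAng, deriv_R_eq, Complex.log_im]
  have hαderiv : deriv (fun s => alphaAng s t₂) t₁ =
      ((Dc t₁ / Δ)⁻¹ * ((Fc t₁ * Δ - Dc t₁ * -(Dc t₁)) / Δ ^ 2)).im := by
    rw [hαfun]
    exact himα.deriv
  have hαval : (Dc t₁ / Δ)⁻¹ * ((Fc t₁ * Δ - Dc t₁ * -(Dc t₁)) / Δ ^ 2)
      = Fc t₁ / Dc t₁ + Dc t₁ / Δ := by
    field_simp [Dc_ne_zero t₁, hΔ0]
    ring
  -- β derivative
  have hquotβ : HasDerivAt (fun s => Dc t₂ / (R t₂ - R s))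
      ((0 * Δ - Dc t₂ * -(Dc t₁)) / Δ ^ 2) t₁ :=
    (hasDerivAt_const t₁ (Dc t₂)).div hRfun hΔ0
  have hlogβ := (Complex.hasDerivAt_log (hslit t₂)).comp t₁ hquotβ
  have himβ := Complex.imCLM.hasFDerivAt.comp_hasDerivAt t₁ hlogβ
  have hβfun : (fun s => betaAng s t₂) =
      fun s => (Complex.log (Dc t₂ / (R t₂ - R s))).im := by
    funext s
    rw [betaAng, deriv_R_eq, Complex.log_im]
  have hβderiv : deriv (fun s => betaAng s t₂) t₁ =
      ((Dc t₂ / Δ)⁻¹ * ((0 * Δ - Dc t₂ * -(Dc t₁)) / Δ ^ 2)).im := by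
    rw [hβfun]
    exact himβ.deriv
  have hβval : (Dc t₂ / Δ)⁻¹ * ((0 * Δ - Dc t₂ * -(Dc t₁)) / Δ ^ 2) = Dc t₁ / Δ := by
    field_simp [Dc_ne_zero t₂, hΔ0]
    ring
  -- RHS derivative
  have habs : ∀ s, ‖R t₂ - R s‖
      = Real.sqrt ((Real.sin t₂ - Real.sin s) ^ 2 + (xi t₂ - xi s) ^ 2) := by
    intro s
    rw [Complex.norm_def, Complex.normSq_apply]
    simp only [Complex.sub_re, Complex.sub_im, R_re, R_im]
    ring_nf
  have hsinfun : HasDerivAt (fun s => Real.sin t₂ - Real.sin s) (-Real.cos t₁) t₁ :=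
    (Real.hasDerivAt_sin t₁).const_sub (Real.sin t₂)
  have hxifun : HasDerivAt (fun s => xi t₂ - xi s) (-gg t₁) t₁ :=
    (hasDerivAt_xi t₁).const_sub (xi t₂)
  have hnfun : HasDerivAt (fun s => (Real.sin t₂ - Real.sin s) ^ 2 + (xi t₂ - xi s) ^ 2)
      (2 * (Real.sin t₂ - Real.sin t₁) * (-Real.cos t₁)
        + 2 * (xi t₂ - xi t₁) * (-gg t₁)) t₁ := by
    have h1 := (hsinfun.pow 2).add (hxifun.pow 2)
    refine h1.congr_deriv (Eq.symm ?_)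
    ring
  have hsqrtfun : HasDerivAt
      (fun s => Real.sqrt ((Real.sin t₂ - Real.sin s) ^ 2 + (xi t₂ - xi s) ^ 2))
      ((2 * (Real.sin t₂ - Real.sin t₁) * (-Real.cos t₁) + 2 * (xi t₂ - xi t₁) * (-gg t₁))
        / (2 * Real.sqrt ((Real.sin t₂ - Real.sin t₁) ^ 2 + (xi t₂ - xi t₁) ^ 2))) t₁ := by
    have := (Real.hasDerivAt_sqrt hnpos.ne').comp t₁ hnfun
    refine this.congr_deriv (Eq.symm ?_)
    field_simp
  have hrhsfun : HasDerivAt (fun s => ‖R t₂ - R s‖ * (xi t₂ - xi s))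
      (((2 * (Real.sin t₂ - Real.sin t₁) * (-Real.cos t₁) + 2 * (xi t₂ - xi t₁) * (-gg t₁))
          / (2 * Real.sqrt ((Real.sin t₂ - Real.sin t₁) ^ 2 + (xi t₂ - xi t₁) ^ 2)))
        * (xi t₂ - xi t₁)
        + Real.sqrt ((Real.sin t₂ - Real.sin t₁) ^ 2 + (xi t₂ - xi t₁) ^ 2) * -gg t₁) t₁ := by
    have h1 := hsqrtfun.mul hxifun
    have h2 : (fun s => ‖R t₂ - R s‖ * (xi t₂ - xi s))
        = fun s => Real.sqrt ((Real.sin t₂ - Real.sin s) ^ 2 + (xi t₂ - xi s) ^ 2)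
            * (xi t₂ - xi s) := by
      funext s; rw [habs s]
    rw [h2]
    exact h1
  rw [hrhsfun.deriv, hαderiv, hβderiv, hαval, hβval]
  -- now pure algebra
  rw [Complex.add_im, im_Fc_div_Dc]
  have hdivim : (Dc t₁ / Δ).im
      = (gg t₁ * (Real.sin t₂ - Real.sin t₁) - Real.cos t₁ * (xi t₂ - xi t₁))
        / ((Real.sin t₂ - Real.sin t₁) ^ 2 + (xi t₂ - xi t₁) ^ 2) := by
    rw [Complex.div_im, hns, hΔre, hΔim, Dc_re, Dc_im]
    ring
  rw [hdivim]
  have habs1 : ‖R t₂ - R t₁‖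
      = Real.sqrt ((Real.sin t₂ - Real.sin t₁) ^ 2 + (xi t₂ - xi t₁) ^ 2) := habs t₁
  rw [← hΔdef] at habs1
  rw [habs1]
  -- set up real variables
  set p := Real.sin t₂ - Real.sin t₁ with hp
  set qq := xi t₂ - xi t₁ with hqq
  set l := Real.sqrt (p ^ 2 + qq ^ 2) with hl
  have hl2 : l ^ 2 = p ^ 2 + qq ^ 2 := Real.sq_sqrt hnpos.le
  have hlpos : 0 < l := Real.sqrt_pos.2 hnpos
  set r := Real.sqrt (1 + Real.sin t₁ ^ 2) with hr
  have hr2 : r ^ 2 = 1 + Real.sin t₁ ^ 2 := sqrt_sq1 t₁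
  have hrpos : 0 < r := sqrt_pos1 t₁
  have hb : gg t₁ * r = Real.sin t₁ ^ 2 := by
    rw [gg, ← hr, div_mul_cancel₀ _ hrpos.ne']
  set b := gg t₁ with hbdef
  have hs2 : Real.sin t₂ = p + Real.sin t₁ := by rw [hp]; ring
  rw [hs2, ← hl2]
  field_simp
  linear_combination (2*l^2) * hb + (-r*b) * hl2
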